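/- In the Baumslag–Gersten group G = ⟨x, y, t | y⁻¹xy = x², t⁻¹xt = y⟩, let v = t⁻¹ g t where g is a word in x^{±1}, y^{±1} equal to x^i in BS(1,2) with i ≠ 0. If D is a van Kampen diagram over the presentation of G for the word t⁻¹ g t g'⁻¹ where g' is a word in x^{±1}, y^{±1}, then every such diagram in which the two boundary t-edges are connected by a t-band of length k satisfies: g' = y^i in BS(1,2) and k = |i|. In particular every diagram demonstrating the pinch t⁻¹ x^i t = y^i contains at least |i| t-cells. -/

import Mathlib

def bsRels : Set (FreeGroup (Fin 2)) :=
  {(FreeGroup.of 1)⁻¹ * FreeGroup.of 0 * FreeGroup.of 1 *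
    (FreeGroup.of 0 * FreeGroup.of 0)⁻¹}

abbrev BS := PresentedGroup bsRels

def bsx : BS := PresentedGroup.of 0
def bsy : BS := PresentedGroup.of 1

/-- The Baumslag–Solitar relator y⁻¹xyx⁻² of the Baumslag–Gersten presentation,
as an element of the free group on x, y, t (indices 0, 1, 2). -/
def relBS : FreeGroup (Fin 3) :=
  (FreeGroup.of 1)⁻¹ * FreeGroup.of 0 * FreeGroup.of 1 *
    (FreeGroup.of 0 * FreeGroup.of 0)⁻¹

/-- The t-relator t⁻¹xty⁻¹; a 2-cell labelled by it is a t-cell. -/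
def relT : FreeGroup (Fin 3) :=
  (FreeGroup.of 2)⁻¹ * FreeGroup.of 0 * FreeGroup.of 2 * (FreeGroup.of 1)⁻¹

/-- Embedding of words in x, y into words in x, y, t. -/
def embXY : FreeGroup (Fin 2) →* FreeGroup (Fin 3) :=
  FreeGroup.lift fun j => FreeGroup.of j.castSucc

noncomputable def zpowersIso {G : Type*} [Group G] (a : G) (ha : ¬ IsOfFinOrder a) :
    Multiplicative ℤ ≃* Subgroup.zpowers a :=
  MulEquiv.ofBijective (zpowersHom _ ⟨a, Subgroup.mem_zpowers a⟩)
    ⟨by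
      have ha' : ¬ IsOfFinOrder (⟨a, Subgroup.mem_zpowers a⟩ : Subgroup.zpowers a) := by
        intro hf
        exact ha (MonoidHom.isOfFinOrder ((Subgroup.zpowers a).subtype) hf)
      intro m n h
      have hinj := injective_zpow_iff_not_isOfFinOrder.2 ha'
      simpa using hinj (by simpa [zpowersHom_apply] using h : (⟨a, Subgroup.mem_zpowers a⟩ : Subgroup.zpowers a) ^ Multiplicative.toAdd m = _ ^ Multiplicative.toAdd n),
     by
      rintro ⟨b, hb⟩
      obtain ⟨k, hk⟩ := Subgroup.mem_zpowers_iff.1 hb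
      exact ⟨Multiplicative.ofAdd k, Subtype.ext (by simp [hk])⟩⟩

lemma zpowersIso_coe {G : Type*} [Group G] (a : G) (ha : ¬ IsOfFinOrder a) (k : ℤ) :
    ((zpowersIso a ha (Multiplicative.ofAdd k) : Subgroup.zpowers a) : G) = a ^ k := by
  simp [zpowersIso, MulEquiv.ofBijective]
  rfl



noncomputable def permX : Equiv.Perm ℚ := Equiv.addRight 1
noncomputable def permY : Equiv.Perm ℚ := Equiv.mulRight₀ (2:ℚ)⁻¹ (by norm_num)

noncomputable def fPerm : Fin 2 → Equiv.Perm ℚ := ![permX, permY]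

lemma fPerm_rels : ∀ r ∈ bsRels, FreeGroup.lift fPerm r = 1 := by
  intro r hr
  have : r = (FreeGroup.of 1)⁻¹ * FreeGroup.of 0 * FreeGroup.of 1 *
      (FreeGroup.of 0 * FreeGroup.of 0)⁻¹ := hr
  subst this
  ext a
  simp [map_mul, map_inv, FreeGroup.lift_apply_of, fPerm, permX, permY, Equiv.Perm.mul_apply, mul_inv_rev, Equiv.Perm.inv_def,
    Equiv.mulRight_symm, Equiv.mulRight₀]
  ring

noncomputable def permRep : BS →* Equiv.Perm ℚ := PresentedGroup.toGroup fPerm_rels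

lemma bsx_not_finOrder : ¬ IsOfFinOrder bsx := by
  intro hf
  have h2 : IsOfFinOrder (permRep bsx) := MonoidHom.isOfFinOrder permRep hf
  have hx : permRep bsx = permX := by
    show PresentedGroup.toGroup fPerm_rels (PresentedGroup.of 0) = _
    simp [PresentedGroup.toGroup.of, fPerm]
  rw [hx] at h2
  obtain ⟨n, hn, h1⟩ := isOfFinOrder_iff_pow_eq_one.1 h2
  have : permX ^ n = 1 := h1
  have := congrArg (fun e => (e : Equiv.Perm ℚ) 0) this
  simp [permX] at this
  omega

def fYexp : Fin 2 → Multiplicative ℤ := ![Multiplicative.ofAdd 0, Multiplicative.ofAdd 1]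

lemma fYexp_rels : ∀ r ∈ bsRels, FreeGroup.lift fYexp r = 1 := by
  intro r hr
  have : r = (FreeGroup.of 1)⁻¹ * FreeGroup.of 0 * FreeGroup.of 1 *
      (FreeGroup.of 0 * FreeGroup.of 0)⁻¹ := hr
  subst this
  simp only [map_mul, map_inv, FreeGroup.lift_apply_of]
  decide

noncomputable def yexp : BS →* Multiplicative ℤ := PresentedGroup.toGroup fYexp_rels

lemma yexp_x : yexp bsx = 1 := by
  show PresentedGroup.toGroup fYexp_rels (PresentedGroup.of 0) = 1
  simp [PresentedGroup.toGroup.of, fYexp]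

lemma yexp_y : yexp bsy = Multiplicative.ofAdd 1 := by
  show PresentedGroup.toGroup fYexp_rels (PresentedGroup.of 1) = _
  simp [PresentedGroup.toGroup.of, fYexp]

lemma bsy_not_finOrder : ¬ IsOfFinOrder bsy := by
  intro hf
  have h2 : IsOfFinOrder (yexp bsy) := MonoidHom.isOfFinOrder yexp hf
  rw [yexp_y] at h2
  obtain ⟨n, hn, h1⟩ := isOfFinOrder_iff_pow_eq_one.1 h2
  have : Multiplicative.ofAdd (n : ℤ) = Multiplicative.ofAdd 0 := by
    simpa [← ofAdd_nsmul] using h1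
  simp at this
  omega


noncomputable def isoX : Multiplicative ℤ ≃* Subgroup.zpowers bsx :=
  zpowersIso bsx bsx_not_finOrder
noncomputable def isoY : Multiplicative ℤ ≃* Subgroup.zpowers bsy :=
  zpowersIso bsy bsy_not_finOrder
noncomputable def φBS : Subgroup.zpowers bsy ≃* Subgroup.zpowers bsx :=
  isoY.symm.trans isoX

noncomputable abbrev HG : Type :=
  HNNExtension BS (Subgroup.zpowers bsy) (Subgroup.zpowers bsx) φBS

lemma φBS_symm_coe (k : ℤ) (h : bsx ^ k ∈ Subgroup.zpowers bsx) :
    ((φBS.symm ⟨bsx ^ k, h⟩ : Subgroup.zpowers bsy) : BS) = bsy ^ k := by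
  have hx : (⟨bsx ^ k, h⟩ : Subgroup.zpowers bsx) = isoX (Multiplicative.ofAdd k) :=
    Subtype.ext (zpowersIso_coe bsx bsx_not_finOrder k).symm
  rw [hx]
  show ((isoY ((isoX.symm (isoX (Multiplicative.ofAdd k)))) : Subgroup.zpowers bsy) : BS) = _
  rw [MulEquiv.symm_apply_apply]
  exact zpowersIso_coe bsy bsy_not_finOrder k

lemma tconj (k : ℤ) :
    (HNNExtension.t)⁻¹ * HNNExtension.of (bsx ^ k) * HNNExtension.t =
      (HNNExtension.of (bsy ^ k) : HG) := by
  have h := HNNExtension.equiv_symm_eq_conj (φ := φBS)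
    ⟨bsx ^ k, zpow_mem (Subgroup.mem_zpowers bsx) k⟩
  rw [φBS_symm_coe] at h
  exact h.symm

noncomputable def ΦH : FreeGroup (Fin 3) →* HG :=
  FreeGroup.lift ![HNNExtension.of bsx, HNNExtension.of bsy, HNNExtension.t]

lemma bs_rel_holds : bsy⁻¹ * bsx * bsy * (bsx * bsx)⁻¹ = 1 := by
  have h : PresentedGroup.mk bsRels ((FreeGroup.of 1)⁻¹ * FreeGroup.of 0 * FreeGroup.of 1 *
      (FreeGroup.of 0 * FreeGroup.of 0)⁻¹) = 1 :=
    (QuotientGroup.eq_one_iff _).2 (Subgroup.subset_normalClosure rfl)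
  simpa [map_mul, map_inv, bsx, bsy, PresentedGroup.of] using h

lemma ΦH_relBS : ΦH relBS = 1 := by
  have h : (HNNExtension.of : BS →* HG) (bsy⁻¹ * bsx * bsy * (bsx * bsx)⁻¹) = 1 := by
    rw [bs_rel_holds, map_one]
  simp only [map_mul, map_inv] at h
  simpa [ΦH, relBS, map_mul, map_inv, FreeGroup.lift_apply_of] using h

lemma ΦH_relT : ΦH relT = 1 := by
  have h := tconj 1
  simp only [zpow_one] at h
  simp only [ΦH, relT, map_mul, map_inv, FreeGroup.lift_apply_of]
  simp only [Matrix.cons_val_zero, Matrix.cons_val_one, Matrix.head_cons, Matrix.cons_val_two,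
    Matrix.tail_cons]
  rw [mul_inv_eq_one]
  exact h

lemma ΦH_embXY (w : FreeGroup (Fin 2)) :
    ΦH (embXY w) = HNNExtension.of (PresentedGroup.mk bsRels w) := by
  have : ΦH.comp embXY =
      (HNNExtension.of (G := BS) (A := Subgroup.zpowers bsy)
        (B := Subgroup.zpowers bsx) (φ := φBS)).comp (PresentedGroup.mk bsRels) := by
    ext j
    fin_cases j <;>
      simp [ΦH, embXY, FreeGroup.lift_apply_of, bsx, bsy, PresentedGroup.of, PresentedGroup.mk] <;> rfl
  exact DFunLike.congr_fun this w

def fT3 : Fin 3 → Multiplicative ℤ := ![1, Multiplicative.ofAdd 1, 1]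

noncomputable def σ3 : FreeGroup (Fin 3) →* Multiplicative ℤ := FreeGroup.lift fT3

lemma yexp_of (j : Fin 2) :
    yexp (PresentedGroup.mk bsRels (FreeGroup.of j)) = fYexp j :=
  PresentedGroup.toGroup.of fYexp_rels

lemma σ3_embXY (w : FreeGroup (Fin 2)) :
    σ3 (embXY w) = yexp (PresentedGroup.mk bsRels w) := by
  have : σ3.comp embXY = yexp.comp (PresentedGroup.mk bsRels) := by
    ext j
    fin_cases j <;>
      simp [σ3, embXY, FreeGroup.lift_apply_of, fT3, yexp_of, fYexp, MonoidHom.comp_apply]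
  exact DFunLike.congr_fun this w

lemma σ3_relBS : σ3 relBS = 1 := by
  simp [σ3, relBS, map_mul, map_inv, FreeGroup.lift_apply_of, fT3]

lemma σ3_relT : σ3 relT = Multiplicative.ofAdd (-1) := by
  simp [σ3, relT, map_mul, map_inv, FreeGroup.lift_apply_of, fT3]

lemma relBS_ne_relT : relBS ≠ relT := by
  intro h
  have := congrArg σ3 h
  rw [σ3_relBS, σ3_relT] at this
  exact absurd this (by decide)

/-- Let g be a word in x^{±1}, y^{±1} equal to x^i in BS(1,2).  Any van Kampen diagram
over the Baumslag–Gersten presentation with boundary word t⁻¹ g t g'⁻¹ (g' a word in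
x^{±1}, y^{±1}), i.e. any expression of t⁻¹ g t g'⁻¹ in the free group as a product of
conjugates of the relators, forces g' = y^i in BS(1,2) and uses at least |i| t-cells. -/
theorem stmt18 (i : ℤ) (g g' : FreeGroup (Fin 2))
    (hg : PresentedGroup.mk bsRels g = bsx ^ i)
    (N : ℕ) (c r : Fin N → FreeGroup (Fin 3)) (ε : Fin N → ℤ)
    (hr : ∀ j, (r j = relBS ∨ r j = relT) ∧ (ε j = 1 ∨ ε j = -1))
    (hprod : (FreeGroup.of 2)⁻¹ * embXY g * FreeGroup.of 2 * (embXY g')⁻¹ =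
      (List.ofFn fun j => c j * r j ^ ε j * (c j)⁻¹).prod) :
    PresentedGroup.mk bsRels g' = bsy ^ i ∧
      i.natAbs ≤ Nat.card {j : Fin N // r j = relT} := by
  classical
  -- Part 1
  have hΦ : ΦH ((FreeGroup.of 2)⁻¹ * embXY g * FreeGroup.of 2 * (embXY g')⁻¹) = 1 := by
    rw [hprod, map_list_prod, List.map_ofFn]
    apply List.prod_eq_one
    intro x hx
    obtain ⟨j, rfl⟩ := List.mem_ofFn.1 hx
    have hrj : ΦH (r j) = 1 := by
      rcases (hr j).1 with h | h <;> rw [h]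
      exacts [ΦH_relBS, ΦH_relT]
    simp [map_mul, map_inv, map_zpow, hrj]
  have hof2 : ΦH (FreeGroup.of 2) = HNNExtension.t := by
    simp [ΦH, FreeGroup.lift_apply_of, fT3]
  simp only [map_mul, map_inv] at hΦ
  rw [hof2, ΦH_embXY, ΦH_embXY, hg, map_zpow, mul_inv_eq_one] at hΦ
  have key : HNNExtension.of (PresentedGroup.mk bsRels g') = (HNNExtension.of (bsy ^ i) : HG) := by
    rw [← hΦ]
    have h2 := tconj i
    rw [map_zpow] at h2
    rw [h2]
  have part1 : PresentedGroup.mk bsRels g' = bsy ^ i := HNNExtension.of_injective (φ := φBS) key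
  refine ⟨part1, ?_⟩
  -- Part 2
  have hσL : σ3 ((FreeGroup.of 2)⁻¹ * embXY g * FreeGroup.of 2 * (embXY g')⁻¹) =
      Multiplicative.ofAdd (-i) := by
    simp only [map_mul, map_inv]
    rw [σ3_embXY, σ3_embXY, hg, part1, map_zpow, map_zpow, yexp_x, yexp_y]
    have : σ3 (FreeGroup.of 2) = 1 := by simp [σ3, FreeGroup.lift_apply_of, fT3]
    rw [this]
    simp [← ofAdd_zsmul]
  have hσR : σ3 ((List.ofFn fun j => c j * r j ^ ε j * (c j)⁻¹).prod) =
      ∏ j : Fin N, σ3 (r j) ^ ε j := by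
    rw [map_list_prod, List.map_ofFn, List.prod_ofFn]
    refine Finset.prod_congr rfl fun j _ => ?_
    simp only [Function.comp_apply, map_mul, map_inv, map_zpow]
    rw [mul_comm (σ3 (c j)) (σ3 (r j) ^ ε j), mul_inv_cancel_right]
  have hval : ∀ j, σ3 (r j) = Multiplicative.ofAdd (if r j = relT then (-1:ℤ) else 0) := by
    intro j
    rcases (hr j).1 with h | h
    · rw [h, if_neg (by rw [← h]; exact fun hT => relBS_ne_relT (h ▸ hT)), σ3_relBS]; rfl
    · rw [h, if_pos rfl, σ3_relT]
  have hsum : -i = ∑ j : Fin N, ε j * (if r j = relT then (-1:ℤ) else 0) := by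
    have := hσL.symm.trans (by rw [hprod] : σ3 ((FreeGroup.of 2)⁻¹ * embXY g * FreeGroup.of 2 *
      (embXY g')⁻¹) = σ3 ((List.ofFn fun j => c j * r j ^ ε j * (c j)⁻¹).prod))
    rw [hσR] at this
    have h2 : ∏ j : Fin N, σ3 (r j) ^ ε j =
        Multiplicative.ofAdd (∑ j : Fin N, ε j * (if r j = relT then (-1:ℤ) else 0)) := by
      rw [ofAdd_sum]
      refine Finset.prod_congr rfl fun j _ => ?_
      rw [hval j, ← ofAdd_zsmul, smul_eq_mul]
    rw [h2] at this
    exact Multiplicative.ofAdd.injective this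
  have hi : i = ∑ j ∈ Finset.univ.filter (fun j => r j = relT), ε j := by
    have : -i = ∑ j : Fin N, -(if r j = relT then ε j else 0) := by
      rw [hsum]
      refine Finset.sum_congr rfl fun j _ => ?_
      by_cases h : r j = relT <;> simp [h]
    rw [Finset.sum_neg_distrib] at this
    have h3 : i = ∑ j : Fin N, (if r j = relT then ε j else 0) := by linarith
    rw [h3, Finset.sum_filter]
  have hcard : Nat.card {j : Fin N // r j = relT} =
      (Finset.univ.filter (fun j => r j = relT)).card := by
    rw [Nat.card_eq_fintype_card, Fintype.card_subtype]
  rw [hcard]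
  have habs : |i| ≤ ((Finset.univ.filter (fun j => r j = relT)).card : ℤ) := by
    rw [hi]
    calc |∑ j ∈ Finset.univ.filter (fun j => r j = relT), ε j|
        ≤ ∑ j ∈ Finset.univ.filter (fun j => r j = relT), |ε j| := Finset.abs_sum_le_sum_abs _ _
      _ = ∑ j ∈ Finset.univ.filter (fun j => r j = relT), 1 := by
          refine Finset.sum_congr rfl fun j _ => ?_
          rcases (hr j).2 with h | h <;> simp [h]
      _ = _ := by simp
  rw [Int.abs_eq_natAbs] at habs
  exact_mod_cast habs
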